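/- Let n ≥ 1 and A ∈ GL_n(ℂ) with minimal polynomial m(X) = X^p − c_{p−1}X^{p−1} − ⋯ − c_1X − c_0, let C_m be the companion matrix of m, and let c := (c_{p−1}, c_{p−2}, …, c_0) ∈ ℂ^p. Then C_m is invertible, and for every integer k ∈ ℤ one has A^k = Σ_{i=1}^p ((C_m)^k·c)_i · A^{−i}, where (C_m)^k·c denotes the matrix–vector product of the k-th (integer) power of C_m with c. -/

import Mathlib

open Polynomial Matrix Finset

/-- The companion matrix of the monic polynomial
`X^p − c_{p−1}X^{p−1} − ⋯ − c_1 X − c_0` (where `c i` is the coefficient `c_i`):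
its first column is `(c_{p−1}, …, c_0)ᵗ`, its `(i, i+1)` entries are `1`,
and all other entries are `0`. -/
def companionOf (p : ℕ) (c : Fin p → ℂ) : Matrix (Fin p) (Fin p) ℂ :=
  Matrix.of fun i j : Fin p =>
    if (j : ℕ) = (i : ℕ) + 1 then 1 else if (j : ℕ) = 0 then c i.rev else 0

private lemma sum_ite_val {M : Type*} [AddCommMonoid M] (m a : ℕ) (x : Fin m → M) :
    (∑ j : Fin m, if (j : ℕ) = a then x j else 0) = if h : a < m then x ⟨a, h⟩ else 0 := by
  split_ifs with h
  · rw [Finset.sum_eq_single (⟨a, h⟩ : Fin m)]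
    · simp
    · intro b _ hb
      rw [if_neg]
      exact fun hba => hb (Fin.ext hba)
    · simp
  · apply Finset.sum_eq_zero
    intro j _
    rw [if_neg]
    exact fun hja => h (hja ▸ j.isLt)

private lemma companion_apply (p : ℕ) (c : Fin p → ℂ) (i j : Fin p) :
    companionOf p c i j
      = if (j : ℕ) = (i : ℕ) + 1 then 1 else if (j : ℕ) = 0 then c i.rev else 0 := rfl

private lemma companion_mulVec (m : ℕ) (c : Fin (m + 1) → ℂ) (v : Fin (m + 1) → ℂ)
    (i : Fin (m + 1)) :
    (companionOf (m + 1) c).mulVec v i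
      = c i.rev * v 0 + (if h : (i : ℕ) < m then v (Fin.succ ⟨i, h⟩) else 0) := by
  rw [Matrix.mulVec, dotProduct]
  simp only [companion_apply]
  rw [Fin.sum_univ_succ]
  have h00 : (if ((0 : Fin (m + 1)) : ℕ) = (i : ℕ) + 1 then (1 : ℂ)
      else if ((0 : Fin (m + 1)) : ℕ) = 0 then c i.rev else 0) * v 0 = c i.rev * v 0 := by
    rw [Fin.val_zero, if_neg (by omega), if_pos rfl]
  rw [h00]
  have e : ∀ j : Fin m,
      (if ((j.succ : Fin (m + 1)) : ℕ) = (i : ℕ) + 1 then (1 : ℂ)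
        else if ((j.succ : Fin (m + 1)) : ℕ) = 0 then c i.rev else 0) * v j.succ
        = if ((j : ℕ)) = (i : ℕ) then v j.succ else 0 := by
    intro j
    rw [Fin.val_succ]
    by_cases h : (j : ℕ) = (i : ℕ)
    · rw [if_pos (by omega), if_pos h, one_mul]
    · rw [if_neg (by omega), if_neg (by omega), zero_mul, if_neg h]
  rw [Finset.sum_congr rfl fun j _ => e j, sum_ite_val]

private lemma degree_helper (N : ℕ) (b : Fin N → ℂ) :
    (X ^ N - ∑ i : Fin N, C (b i) * X ^ (i : ℕ)).degree = (N : WithBot ℕ) := by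
  have h1 : (∑ i : Fin N, C (b i) * X ^ (i : ℕ)).degree < (X ^ N : ℂ[X]).degree := by
    rw [degree_X_pow]
    apply lt_of_le_of_lt (Polynomial.degree_sum_le _ _)
    rw [Finset.sup_lt_iff (by exact_mod_cast WithBot.bot_lt_coe N)]
    intro i _
    exact lt_of_le_of_lt (degree_C_mul_X_pow_le _ _) (by exact_mod_cast i.isLt)
  rw [degree_sub_eq_left_of_degree_lt h1, degree_X_pow]

theorem zpow_eq_sum_companion_zpow_mulVec (n : ℕ) (hn : 1 ≤ n)
    (A : Matrix (Fin n) (Fin n) ℂ) (hA : IsUnit A) (p : ℕ) (hp : 1 ≤ p)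
    (c : Fin p → ℂ)
    (hm : minpoly ℂ A =
      Polynomial.X ^ p - ∑ i : Fin p, Polynomial.C (c i) * Polynomial.X ^ (i : ℕ)) :
    IsUnit (companionOf p c) ∧
      ∀ k : ℤ, A ^ k =
        ∑ i : Fin p,
          ((companionOf p c) ^ k).mulVec (fun j : Fin p => c j.rev) i • A ^ (-1 - (i : ℤ)) := by
  obtain ⟨m, rfl⟩ : ∃ m, p = m + 1 := ⟨p - 1, by omega⟩
  set Cm := companionOf (m + 1) c with hCmdef
  have hAd : IsUnit A.det := (Matrix.isUnit_iff_isUnit_det A).mp hA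
  set B := A⁻¹ with hBdef
  have hAB : A * B = 1 := Matrix.mul_nonsing_inv A hAd
  have hBA : B * A = 1 := Matrix.nonsing_inv_mul A hAd
  -- the polynomial relation
  have hpoly : A ^ (m + 1) = ∑ i : Fin (m + 1), c i • A ^ (i : ℕ) := by
    have h0 := minpoly.aeval ℂ A
    rw [hm] at h0
    simp only [map_sub, map_sum, _root_.map_mul, map_pow, aeval_X, aeval_C] at h0
    rw [sub_eq_zero] at h0
    rw [h0]
    exact Finset.sum_congr rfl fun i _ => by rw [Algebra.smul_def]
  -- c 0 ≠ 0
  have hc0 : c 0 ≠ 0 := by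
    intro h0
    have hq : A ^ m = ∑ i : Fin m, c i.succ • A ^ (i : ℕ) := by
      have h1 : A ^ m * A = (∑ i : Fin m, c i.succ • A ^ (i : ℕ)) * A := by
        rw [← pow_succ, hpoly, Fin.sum_univ_succ, h0, zero_smul, zero_add, Finset.sum_mul]
        exact Finset.sum_congr rfl fun i _ => by
          rw [smul_mul_assoc, ← pow_succ, Fin.val_succ]
      calc A ^ m = A ^ m * A * B := by rw [mul_assoc, hAB, mul_one]
        _ = (∑ i : Fin m, c i.succ • A ^ (i : ℕ)) * A * B := by rw [h1]
        _ = _ := by rw [mul_assoc, hAB, mul_one]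
    have haev : aeval A (X ^ m - ∑ i : Fin m, C (c i.succ) * X ^ (i : ℕ)) = 0 := by
      simp only [map_sub, map_sum, _root_.map_mul, map_pow, aeval_X, aeval_C]
      rw [sub_eq_zero, hq]
      exact Finset.sum_congr rfl fun i _ => by rw [Algebra.smul_def]
    have hd : (X ^ m - ∑ i : Fin m, C (c i.succ) * X ^ (i : ℕ)).degree = (m : WithBot ℕ) :=
      degree_helper m fun i => c i.succ
    have hne : (X ^ m - ∑ i : Fin m, C (c i.succ) * X ^ (i : ℕ)) ≠ 0 := by
      intro hz
      rw [hz, degree_zero] at hd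
      exact absurd hd (by simp)
    have hdm : (minpoly ℂ A).degree = ((m + 1 : ℕ) : WithBot ℕ) := by
      rw [hm]; exact degree_helper (m + 1) c
    have hle := minpoly.degree_le_of_ne_zero ℂ A hne haev
    rw [hdm, hd] at hle
    have : m + 1 ≤ m := by exact_mod_cast hle
    omega
  -- powers of the inverse
  have hBpowA : ∀ j : ℕ, B ^ j * A ^ j = 1 := by
    intro j
    induction j with
    | zero => simp
    | succ j ih => rw [pow_succ, pow_succ', mul_assoc, ← mul_assoc B, hBA, one_mul, ih]
  have hkey0 : ∀ i : ℕ, i ≤ m + 1 → B ^ (m + 1) * A ^ i = B ^ (m + 1 - i) := by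
    intro i hi
    have h2 : B ^ (m + 1) = B ^ (m + 1 - i) * B ^ i := by
      rw [← pow_add]
      congr 1
      omega
    rw [h2, mul_assoc, hBpowA i, mul_one]
  -- the base identity
  have hbase : (1 : Matrix (Fin n) (Fin n) ℂ)
      = ∑ i : Fin (m + 1), c i.rev • B ^ ((i : ℕ) + 1) := by
    have h1 : (1 : Matrix (Fin n) (Fin n) ℂ)
        = ∑ i : Fin (m + 1), c i • B ^ (m + 1 - (i : ℕ)) := by
      calc (1 : Matrix (Fin n) (Fin n) ℂ) = B ^ (m + 1) * A ^ (m + 1) := (hBpowA (m + 1)).symm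
        _ = ∑ i : Fin (m + 1), c i • (B ^ (m + 1) * A ^ (i : ℕ)) := by
            rw [hpoly, Finset.mul_sum]
            exact Finset.sum_congr rfl fun i _ => (mul_smul_comm _ _ _)
        _ = _ := Finset.sum_congr rfl fun i _ => by
            rw [hkey0 (i : ℕ) (by omega)]
    refine h1.trans (Fintype.sum_bijective Fin.rev Fin.rev_bijective _ _ fun i => ?_)
    rw [Fin.rev_rev]
    have h3 : m + 1 - (i : ℕ) = ((i.rev : Fin (m + 1)) : ℕ) + 1 := by
      rw [Fin.val_rev]
      have := i.isLt
      omega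
    rw [h3]
  -- key multiplication identity
  have hApow : ∀ j : ℕ, A * B ^ (j + 1) = B ^ j := by
    intro j
    rw [pow_succ', ← mul_assoc, hAB, one_mul]
  have key : ∀ v : Fin (m + 1) → ℂ,
      A * ∑ i : Fin (m + 1), v i • B ^ ((i : ℕ) + 1)
        = ∑ i : Fin (m + 1), Cm.mulVec v i • B ^ ((i : ℕ) + 1) := by
    intro v
    have lhs : A * ∑ i : Fin (m + 1), v i • B ^ ((i : ℕ) + 1)
        = ∑ i : Fin (m + 1), v i • B ^ (i : ℕ) := by
      rw [Finset.mul_sum]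
      exact Finset.sum_congr rfl fun i _ => by rw [mul_smul_comm, hApow]
    rw [lhs]
    have rhs : ∀ i : Fin (m + 1), Cm.mulVec v i • B ^ ((i : ℕ) + 1)
        = (c i.rev * v 0) • B ^ ((i : ℕ) + 1)
          + (if h : (i : ℕ) < m then v (Fin.succ ⟨i, h⟩) else 0) • B ^ ((i : ℕ) + 1) := by
      intro i
      rw [hCmdef, companion_mulVec, add_smul]
    rw [Finset.sum_congr rfl fun i _ => rhs i, Finset.sum_add_distrib]
    have t1 : ∑ i : Fin (m + 1), (c i.rev * v 0) • B ^ ((i : ℕ) + 1)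
        = v 0 • (1 : Matrix (Fin n) (Fin n) ℂ) := by
      rw [hbase, Finset.smul_sum]
      exact Finset.sum_congr rfl fun i _ => by rw [smul_smul, mul_comm]
    have t2 : ∑ i : Fin (m + 1),
        (if h : (i : ℕ) < m then v (Fin.succ ⟨i, h⟩) else 0) • B ^ ((i : ℕ) + 1)
        = ∑ j : Fin m, v j.succ • B ^ ((j : ℕ) + 1) := by
      rw [Fin.sum_univ_castSucc]
      have hlast : (if h : ((Fin.last m : Fin (m + 1)) : ℕ) < m
          then v (Fin.succ ⟨(Fin.last m : Fin (m + 1)), h⟩) else 0)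
            • B ^ (((Fin.last m : Fin (m + 1)) : ℕ) + 1) = 0 := by
        rw [dif_neg (by simp), zero_smul]
      rw [hlast, add_zero]
      refine Finset.sum_congr rfl fun j _ => ?_
      have hj : ((j.castSucc : Fin (m + 1)) : ℕ) < m := by simpa using j.isLt
      rw [dif_pos hj]
      rfl
    rw [t1, t2, Fin.sum_univ_succ]
    simp only [Fin.val_zero, pow_zero, Fin.val_succ]
  -- Cm is invertible
  have hCd : IsUnit Cm.det := by
    rw [isUnit_iff_ne_zero]
    intro hdet
    obtain ⟨v, hv, hv0⟩ := (Matrix.exists_mulVec_eq_zero_iff).mpr hdet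
    apply hv
    have h0 : v 0 = 0 := by
      have h1 := congrFun hv0 (Fin.last m)
      rw [hCmdef, companion_mulVec, dif_neg (by simp), add_zero, Fin.rev_last,
        Pi.zero_apply] at h1
      exact (mul_eq_zero.mp h1).resolve_left hc0
    have hs : ∀ j : Fin m, v j.succ = 0 := by
      intro j
      have h1 := congrFun hv0 j.castSucc
      have hj : ((j.castSucc : Fin (m + 1)) : ℕ) < m := by simpa using j.isLt
      rw [hCmdef, companion_mulVec, h0, mul_zero, zero_add, dif_pos hj, Pi.zero_apply] at h1
      have h2 : (⟨((j.castSucc : Fin (m + 1)) : ℕ), hj⟩ : Fin m) = j := Fin.ext (by simp)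
      rwa [h2] at h1
    funext i
    exact Fin.cases h0 hs i
  have hCunit : IsUnit Cm := (Matrix.isUnit_iff_isUnit_det Cm).mpr hCd
  have hCinv1 : Cm * Cm⁻¹ = 1 := Matrix.mul_nonsing_inv _ hCd
  -- inverse key identity
  have key' : ∀ w : Fin (m + 1) → ℂ,
      B * ∑ i : Fin (m + 1), w i • B ^ ((i : ℕ) + 1)
        = ∑ i : Fin (m + 1), (Cm⁻¹.mulVec w) i • B ^ ((i : ℕ) + 1) := by
    intro w
    have h1 := key (Cm⁻¹.mulVec w)
    rw [Matrix.mulVec_mulVec, hCinv1, Matrix.one_mulVec] at h1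
    calc B * ∑ i : Fin (m + 1), w i • B ^ ((i : ℕ) + 1)
        = B * (A * ∑ i : Fin (m + 1), (Cm⁻¹.mulVec w) i • B ^ ((i : ℕ) + 1)) := by rw [h1]
      _ = _ := by rw [← mul_assoc, hBA, one_mul]
  refine ⟨hCunit, fun k => ?_⟩
  have hAzpow : ∀ i : ℕ, A ^ (-1 - (i : ℤ)) = B ^ (i + 1) := by
    intro i
    have h1 : (-1 - (i : ℤ)) = -(((i + 1 : ℕ) : ℤ)) := by push_cast; ring
    rw [h1, Matrix.zpow_neg_natCast, ← Matrix.inv_pow']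
  have main : A ^ k
      = ∑ i : Fin (m + 1), ((Cm ^ k).mulVec (fun j : Fin (m + 1) => c j.rev)) i
          • B ^ ((i : ℕ) + 1) := by
    induction k using Int.induction_on with
    | zero => simpa [Matrix.one_mulVec] using hbase
    | succ k ih =>
        have e1 : ((k : ℤ) + 1) = 1 + k := by ring
        rw [e1, Matrix.zpow_add hAd 1 k, Matrix.zpow_add hCd 1 k, zpow_one, zpow_one, ih, key,
          ← Matrix.mulVec_mulVec]
    | pred k ih =>
        have e1 : (-(k : ℤ) - 1) = -1 + -k := by ring
        rw [e1, Matrix.zpow_add hAd (-1) (-k), Matrix.zpow_add hCd (-1) (-k),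
          Matrix.zpow_neg_one, Matrix.zpow_neg_one, ih, key', ← Matrix.mulVec_mulVec]
  rw [main]
  exact Finset.sum_congr rfl fun i _ => by rw [hAzpow]
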